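/- Let W be a Wahl chain for coprime integers 0 < a < n, i.e., the HJ continued fraction of n²/(na-1). Write n/a = [y_1,...,y_v] and n/(n-a) = [x_1,...,x_u] as HJ continued fractions. Then the dual chain of W (the HJ expansion of n²/(n²-na+1)) equals [x_1,...,x_u,2,y_v,...,y_1], and moreover W = [y_1,...,y_{v-1},y_v+x_u,x_{u-1},...,x_1]. -/

import Mathlib

/-- The value of a Hirzebruch–Jung continued fraction `[e₁,…,e_r]`,
computed as `e₁ - 1/[e₂,…,e_r]` with `[e_r] = e_r`. -/
def hjVal : List ℤ → ℚ
  | [] => 0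
  | [x] => (x : ℚ)
  | x :: y :: xs => (x : ℚ) - (hjVal (y :: xs))⁻¹

/-- `IsHJ m q L` : `L` is the HJ continued fraction expansion of `m/q`
(all entries at least 2 and value `m/q`). -/
def IsHJ (m q : ℤ) (L : List ℤ) : Prop :=
  (∀ e ∈ L, 2 ≤ e) ∧ hjVal L = (m : ℚ) / (q : ℚ)

/-- `IsWahlChain n a L` : `L` is the Wahl chain of `n²/(na-1)` for coprime `0 < a < n`. -/
def IsWahlChain (n a : ℤ) (L : List ℤ) : Prop :=
  0 < a ∧ a < n ∧ Int.gcd n a = 1 ∧ IsHJ (n ^ 2) (n * a - 1) L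

namespace HJaux

lemma hjVal_cons (x : ℤ) (xs : List ℤ) : hjVal (x :: xs) = (x : ℚ) - (hjVal xs)⁻¹ := by
  cases xs with
  | nil => simp [hjVal]
  | cons y ys => rfl

abbrev M2 := ℤ × ℤ × ℤ × ℤ

def m2mul : M2 → M2 → M2
  | (a, b, c, d), (e, f, g, h) => (a*e + b*g, a*f + b*h, c*e + d*g, c*f + d*h)

def mat : List ℤ → M2
  | [] => (1, 0, 0, 1)
  | x :: xs => m2mul (x, -1, 1, 0) (mat xs)

lemma mat_cons (x : ℤ) (xs : List ℤ) : mat (x :: xs) = m2mul (x, -1, 1, 0) (mat xs) := rfl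

lemma m2mul_assoc (A B C : M2) : m2mul (m2mul A B) C = m2mul A (m2mul B C) := by
  obtain ⟨a, b, c, d⟩ := A; obtain ⟨e, f, g, h⟩ := B; obtain ⟨i, j, k, l⟩ := C
  simp only [m2mul, Prod.mk.injEq]
  refine ⟨by ring, by ring, by ring, by ring⟩

lemma m2mul_one_left (A : M2) : m2mul (1, 0, 0, 1) A = A := by
  obtain ⟨a, b, c, d⟩ := A
  simp only [m2mul, Prod.mk.injEq]
  refine ⟨by ring, by ring, by ring, by ring⟩

lemma m2mul_one_right (A : M2) : m2mul A (1, 0, 0, 1) = A := by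
  obtain ⟨a, b, c, d⟩ := A
  simp only [m2mul, Prod.mk.injEq]
  refine ⟨by ring, by ring, by ring, by ring⟩

lemma mat_append (L₁ L₂ : List ℤ) : mat (L₁ ++ L₂) = m2mul (mat L₁) (mat L₂) := by
  induction L₁ with
  | nil => simp [mat, m2mul_one_left]
  | cons x xs ih => simp [mat_cons, List.cons_append, ih, m2mul_assoc]

def flip2 : M2 → M2
  | (a, b, c, d) => (a, -c, -b, d)

lemma flip2_mul (A B : M2) : flip2 (m2mul A B) = m2mul (flip2 B) (flip2 A) := by
  obtain ⟨a, b, c, d⟩ := A; obtain ⟨e, f, g, h⟩ := B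
  simp only [m2mul, flip2, Prod.mk.injEq]
  refine ⟨by ring, by ring, by ring, by ring⟩

lemma mat_reverse (L : List ℤ) : mat L.reverse = flip2 (mat L) := by
  induction L with
  | nil => rfl
  | cons x xs ih =>
    rw [List.reverse_cons, mat_append, ih]
    have hx1 : mat [x] = flip2 (x, -1, 1, 0) := by
      rw [mat_cons, show mat ([] : List ℤ) = (1,0,0,1) from rfl, m2mul_one_right]; rfl
    rw [hx1, ← flip2_mul, ← mat_cons]

def det2 : M2 → ℤ
  | (a, b, c, d) => a * d - b * c

lemma det2_mul (A B : M2) : det2 (m2mul A B) = det2 A * det2 B := by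
  obtain ⟨a, b, c, d⟩ := A; obtain ⟨e, f, g, h⟩ := B
  simp only [m2mul, det2]; ring

lemma det2_mat (L : List ℤ) : det2 (mat L) = 1 := by
  induction L with
  | nil => rfl
  | cons x xs ih =>
    rw [mat_cons, det2_mul, ih]
    simp [det2]

lemma hj_facts {L : List ℤ} (h : ∀ e ∈ L, 2 ≤ e) :
    0 ≤ (mat L).2.2.1 ∧ (mat L).2.2.1 < (mat L).1 ∧ (L ≠ [] → 1 ≤ (mat L).2.2.1) ∧
      hjVal L = ((mat L).1 : ℚ) / ((mat L).2.2.1 : ℚ) := by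
  induction L with
  | nil => simp [mat, hjVal]
  | cons x xs ih =>
    obtain ⟨h0, h1, h2, h3⟩ := ih (fun e he => h e (List.mem_cons_of_mem _ he))
    have hx : 2 ≤ x := h x List.mem_cons_self
    rcases hm : mat xs with ⟨p, q, r, s⟩
    rw [hm] at h0 h1 h3
    simp only at h0 h1 h3
    have hmx : mat (x :: xs) = (x * p - r, x * q - s, p, q) := by
      rw [mat_cons, hm]
      simp only [m2mul, Prod.mk.injEq]
      refine ⟨by ring, by ring, by ring, by ring⟩
    rw [hmx]
    simp only
    have hp1 : 1 ≤ p := by omega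
    refine ⟨by omega, by nlinarith, fun _ => hp1, ?_⟩
    rw [hjVal_cons, h3]
    have hpQ : (p : ℚ) ≠ 0 := by exact_mod_cast (by omega : p ≠ 0)
    rw [inv_div]
    push_cast
    field_simp

lemma hjVal_gt_one {L : List ℤ} (h : ∀ e ∈ L, 2 ≤ e) (hne : L ≠ []) : 1 < hjVal L := by
  obtain ⟨h0, h1, h2, h3⟩ := hj_facts h
  have hq := h2 hne
  rw [h3]
  rw [one_lt_div (by exact_mod_cast (by omega : (0:ℤ) < (mat L).2.2.1))]
  exact_mod_cast h1

lemma inv_tail {t : List ℤ} (h : ∀ e ∈ t, 2 ≤ e) :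
    0 ≤ (hjVal t)⁻¹ ∧ (hjVal t)⁻¹ < 1 := by
  cases t with
  | nil => simp [hjVal]
  | cons y ys =>
    have h1 := hjVal_gt_one h (by simp)
    constructor
    · positivity
    · rw [inv_lt_one_iff₀]; right; exact h1

lemma hj_unique {L₁ : List ℤ} : ∀ {L₂ : List ℤ}, (∀ e ∈ L₁, 2 ≤ e) → (∀ e ∈ L₂, 2 ≤ e) →
    hjVal L₁ = hjVal L₂ → L₁ = L₂ := by
  induction L₁ with
  | nil =>
    intro L₂ h1 h2 hv
    cases L₂ with
    | nil => rfl
    | cons y ys =>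
      exfalso
      have := hjVal_gt_one h2 (by simp)
      rw [← hv] at this
      simp [hjVal] at this
      linarith
  | cons x xs ih =>
    intro L₂ h1 h2 hv
    cases L₂ with
    | nil =>
      exfalso
      have := hjVal_gt_one h1 (by simp)
      rw [hv] at this
      simp [hjVal] at this
      linarith
    | cons y ys =>
      have htx : ∀ e ∈ xs, 2 ≤ e := fun e he => h1 e (List.mem_cons_of_mem _ he)
      have hty : ∀ e ∈ ys, 2 ≤ e := fun e he => h2 e (List.mem_cons_of_mem _ he)
      obtain ⟨hx0, hx1⟩ := inv_tail htx
      obtain ⟨hy0, hy1⟩ := inv_tail hty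
      rw [hjVal_cons, hjVal_cons] at hv
      have hxy : x = y := by
        have e1 : (x - y : ℤ) < 1 := by
          exact_mod_cast (show ((x - y : ℤ) : ℚ) < 1 by push_cast; linarith)
        have e2 : (y - x : ℤ) < 1 := by
          exact_mod_cast (show ((y - x : ℤ) : ℚ) < 1 by push_cast; linarith)
        omega
      subst hxy
      have hinv : (hjVal xs)⁻¹ = (hjVal ys)⁻¹ := by linarith
      have := inv_injective hinv
      rw [ih htx hty this]

lemma hj_ident {m q : ℤ} {L : List ℤ} (h : IsHJ m q L) (hm : 0 < m) (hq : 0 < q)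
    (hcop : IsCoprime m q) : (mat L).1 = m ∧ (mat L).2.2.1 = q ∧ L ≠ [] := by
  obtain ⟨hent, hval⟩ := h
  obtain ⟨h0, h1, h2, h3⟩ := hj_facts hent
  have hne : L ≠ [] := by
    rintro rfl
    rw [show hjVal [] = 0 from rfl] at hval
    have : (0:ℚ) < (m : ℚ) / (q : ℚ) := by
      apply div_pos <;> exact_mod_cast (by assumption)
    rw [← hval] at this
    exact lt_irrefl _ this
  have hQ1 : 1 ≤ (mat L).2.2.1 := h2 hne
  have hdet := det2_mat L
  rcases hmL : mat L with ⟨p, b, r, s⟩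
  rw [hmL] at h0 h1 h3 hQ1 hdet
  simp only [det2] at hdet
  simp only at h0 h1 h3 hQ1 ⊢
  have hco : IsCoprime p r := ⟨s, -b, by linarith [hdet]⟩
  rw [h3] at hval
  have hrQ : ((r : ℚ)) ≠ 0 := by exact_mod_cast (by omega : r ≠ 0)
  have hqQ : ((q : ℚ)) ≠ 0 := by exact_mod_cast (by omega : q ≠ 0)
  rw [div_eq_div_iff hrQ hqQ] at hval
  have hcross : p * q = m * r := by exact_mod_cast hval
  have hpm : p ∣ m := hco.dvd_of_dvd_mul_right ⟨q, hcross.symm⟩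
  have hmp : m ∣ p := hcop.dvd_of_dvd_mul_right ⟨r, hcross⟩
  have hpeq : p = m := Int.dvd_antisymm (by omega) (by omega) hpm hmp
  refine ⟨hpeq, ?_, hne⟩
  have hc2 : q = r := mul_left_cancel₀ (by omega : p ≠ 0) (by rw [hcross, hpeq])
  omega

end HJaux

open HJaux

/-- For a Wahl chain `W` of `n²/(na-1)` with `n/a = [y₁,…,y_v]` and
`n/(n-a) = [x₁,…,x_u]`, the dual chain of `W` is `[x₁,…,x_u,2,y_v,…,y₁]` and
`W = [y₁,…,y_{v-1},y_v+x_u,x_{u-1},…,x₁]`. -/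
theorem stmt3 (n a : ℤ) (W Y X : List ℤ)
    (ha : 0 < a) (han : a < n) (hcop : Int.gcd n a = 1)
    (hW : IsWahlChain n a W) (hY : IsHJ n a Y) (hX : IsHJ n (n - a) X) :
    IsHJ (n ^ 2) (n ^ 2 - n * a + 1) (X ++ 2 :: Y.reverse) ∧
    W = Y.dropLast ++ (Y.getLast! + X.getLast!) :: X.dropLast.reverse := by
  obtain ⟨-, -, -, hWhj⟩ := hW
  have hn2 : 2 ≤ n := by omega
  have hcopA : IsCoprime n a := Int.isCoprime_iff_gcd_eq_one.mpr hcop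
  have hcopNA : IsCoprime n (n - a) := by
    have h1 : IsCoprime n (-a) := hcopA.neg_right
    have h2 : IsCoprime n (-a + n * 1) := h1.add_mul_left_right 1
    have h3 : n - a = -a + n * 1 := by ring
    rw [h3]; exact h2
  obtain ⟨hPY, hQY, hYne⟩ := hj_ident hY (by omega) ha hcopA
  obtain ⟨hPX, hQX, hXne⟩ := hj_ident hX (by omega) (by omega) hcopNA
  rcases hmY0 : mat Y with ⟨py, qy, ry, sy⟩
  rcases hmX0 : mat X with ⟨px, qx, rx, sx⟩
  rw [hmY0] at hPY hQY
  rw [hmX0] at hPX hQX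
  have hmY : mat Y = (n, qy, a, sy) := by
    rw [hmY0, show py = n from hPY, show ry = a from hQY]
  have hmX : mat X = (n, qx, n - a, sx) := by
    rw [hmX0, show px = n from hPX, show rx = n - a from hQX]
  clear hmY0 hmX0 hPY hQY hPX hQX
  -- determinant identities
  have hdY := det2_mat Y
  rw [hmY] at hdY
  simp only [det2] at hdY
  have hdX := det2_mat X
  rw [hmX] at hdX
  simp only [det2] at hdX
  -- bounds on qy, qx
  have hYrev_ent : ∀ e ∈ Y.reverse, 2 ≤ e := fun e he => hY.1 e (List.mem_reverse.mp he)
  have hYrev := hj_facts hYrev_ent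
  rw [mat_reverse, hmY] at hYrev
  obtain ⟨hq0, hq1, hq2, -⟩ := hYrev
  have hqy1 : 1 ≤ -qy := hq2 (by simp [hYne])
  have hqy2 : -qy < n := hq1
  have hXrev_ent : ∀ e ∈ X.reverse, 2 ≤ e := fun e he => hX.1 e (List.mem_reverse.mp he)
  have hXrev := hj_facts hXrev_ent
  rw [mat_reverse, hmX] at hXrev
  obtain ⟨hp0, hp1, hp2, -⟩ := hXrev
  have hqx1 : 1 ≤ -qx := hp2 (by simp [hXne])
  have hqx2 : -qx < n := hp1
  -- qy + qx = -n
  have hdvd : n ∣ (qy + qx) :=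
    hcopA.dvd_of_dvd_mul_left ⟨sy + qx - sx, by linear_combination hdX - hdY⟩
  obtain ⟨k, hk⟩ := hdvd
  have hsum : qy + qx = -n := by
    have hkneg : k < 0 := by
      by_contra hcon
      push_neg at hcon
      have h5 : 0 ≤ n * k := mul_nonneg (by omega) hcon
      rw [← hk] at h5
      linarith
    have hkgt : -2 < k := by
      by_contra hcon
      push_neg at hcon
      have h5 : n * k ≤ n * (-2) := mul_le_mul_of_nonneg_left hcon (by omega)
      rw [← hk] at h5
      linarith
    have hkm : k = -1 := by omega
    rw [hkm] at hk
    omega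
  -- Part 1 : the dual chain
  have hDent : ∀ e ∈ X ++ 2 :: Y.reverse, 2 ≤ e := by
    intro e he
    rcases List.mem_append.mp he with h | h
    · exact hX.1 e h
    · rcases List.mem_cons.mp h with h | h
      · omega
      · exact hY.1 e (List.mem_reverse.mp h)
  have hmatD : mat (X ++ 2 :: Y.reverse) =
      m2mul (n, qx, n - a, sx) (m2mul (2, -1, 1, 0) (n, -a, -qy, sy)) := by
    rw [mat_append, mat_cons, mat_reverse, hmY, hmX]
    rfl
  have hPD : (mat (X ++ 2 :: Y.reverse)).1 = n ^ 2 := by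
    rw [hmatD]
    simp only [m2mul]
    linear_combination n * hsum
  have hQD : (mat (X ++ 2 :: Y.reverse)).2.2.1 = n ^ 2 - n * a + 1 := by
    rw [hmatD]
    simp only [m2mul]
    linear_combination hdX + (n - a) * hsum
  obtain ⟨-, -, -, hvD⟩ := hj_facts hDent
  have hIsHJD : IsHJ (n ^ 2) (n ^ 2 - n * a + 1) (X ++ 2 :: Y.reverse) :=
    ⟨hDent, by rw [hvD, hPD, hQD]⟩
  -- Part 2 : the Wahl chain itself
  have hsplit : ∀ (L : List ℤ), L ≠ [] → L.dropLast ++ [L.getLast!] = L := by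
    intro L hL
    cases L with
    | nil => exact absurd rfl hL
    | cons b l =>
      have hgl : (b :: l).getLast! = (b :: l).getLast (by simp) := rfl
      rw [hgl, List.dropLast_append_getLast]
  have hYsp := hsplit Y hYne
  have hXsp := hsplit X hXne
  set y := Y.getLast! with hy
  set x := X.getLast! with hxx
  have hy2 : 2 ≤ y := hY.1 y (by rw [← hYsp]; exact List.mem_append_right _ (by simp))
  have hx2 : 2 ≤ x := hX.1 x (by rw [← hXsp]; exact List.mem_append_right _ (by simp))
  have hmatY' : mat Y = m2mul (mat Y.dropLast) (y, -1, 1, 0) := by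
    conv_lhs => rw [← hYsp]
    rw [mat_append]
    congr 1
    rw [mat_cons, show mat ([] : List ℤ) = (1,0,0,1) from rfl, m2mul_one_right]
  have hmatX' : mat X = m2mul (mat X.dropLast) (x, -1, 1, 0) := by
    conv_lhs => rw [← hXsp]
    rw [mat_append]
    congr 1
    rw [mat_cons, show mat ([] : List ℤ) = (1,0,0,1) from rfl, m2mul_one_right]
  have hinvy : m2mul ((y:ℤ), -1, 1, 0) ((0:ℤ), 1, -1, y) = ((1:ℤ), 0, 0, 1) := by
    simp only [m2mul, Prod.mk.injEq]
    refine ⟨by ring, by ring, by ring, by ring⟩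
  have hinvx : m2mul ((x:ℤ), -1, 1, 0) ((0:ℤ), 1, -1, x) = ((1:ℤ), 0, 0, 1) := by
    simp only [m2mul, Prod.mk.injEq]
    refine ⟨by ring, by ring, by ring, by ring⟩
  have hmatYd : mat Y.dropLast = (-qy, n + qy * y, -sy, a + sy * y) := by
    have h1 : m2mul (mat Y) ((0 : ℤ), 1, -1, y) = mat Y.dropLast := by
      rw [hmatY', m2mul_assoc, hinvy, m2mul_one_right]
    rw [← h1, hmY]
    simp only [m2mul, Prod.mk.injEq]
    refine ⟨by ring, by ring, by ring, by ring⟩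
  have hmatXd : mat X.dropLast = (-qx, n + qx * x, -sx, (n - a) + sx * x) := by
    have h1 : m2mul (mat X) ((0 : ℤ), 1, -1, x) = mat X.dropLast := by
      rw [hmatX', m2mul_assoc, hinvx, m2mul_one_right]
    rw [← h1, hmX]
    simp only [m2mul, Prod.mk.injEq]
    refine ⟨by ring, by ring, by ring, by ring⟩
  have hWent : ∀ e ∈ Y.dropLast ++ (y + x) :: X.dropLast.reverse, 2 ≤ e := by
    intro e he
    rcases List.mem_append.mp he with h | h
    · exact hY.1 e (List.dropLast_subset Y h)
    · rcases List.mem_cons.mp h with h | h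
      · omega
      · exact hX.1 e (List.dropLast_subset X (List.mem_reverse.mp h))
  have hmatW : mat (Y.dropLast ++ (y + x) :: X.dropLast.reverse) =
      m2mul (-qy, n + qy * y, -sy, a + sy * y)
        (m2mul (y + x, -1, 1, 0) (-qx, - -sx, -(n + qx * x), (n - a) + sx * x)) := by
    rw [mat_append, mat_cons, mat_reverse, hmatYd, hmatXd]
    rfl
  have hPW : (mat (Y.dropLast ++ (y + x) :: X.dropLast.reverse)).1 = n ^ 2 := by
    rw [hmatW]
    simp only [m2mul]
    linear_combination (-n) * hsum
  have hQW : (mat (Y.dropLast ++ (y + x) :: X.dropLast.reverse)).2.2.1 = n * a - 1 := by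
    rw [hmatW]
    simp only [m2mul]
    linear_combination (-1) * hdY + (-a) * hsum
  obtain ⟨-, -, -, hvW⟩ := hj_facts hWent
  refine ⟨hIsHJD, ?_⟩
  apply hj_unique hWhj.1 hWent
  rw [hWhj.2, hvW, hPW, hQW]
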